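/- Let E be a finite-dimensional real inner product space, let θ ∈ [0, 1], let x ∈ E, and let φ, ψ : E → ℝ be differentiable at x. Define ζ : E → ℝ by ζ(y) := √((1−θ)·φ(y)² + θ·ψ(y)²), and assume ζ(x) > 0. Then ζ is differentiable at x and ‖∇ζ(x)‖² ≤ (1−θ)·‖∇φ(x)‖² + θ·‖∇ψ(x)‖². -/

import Mathlib

/-- The key convexity computation for the Donsker–Varadhan
functional: with `ζ = √((1−θ)φ² + θψ²)` and `ζ(x) > 0`, the function `ζ` is
differentiable at `x` and `‖∇ζ(x)‖² ≤ (1−θ)‖∇φ(x)‖² + θ‖∇ψ(x)‖²`. -/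
theorem stmt_9 {E : Type*} [NormedAddCommGroup E] [InnerProductSpace ℝ E]
    [FiniteDimensional ℝ E] (θ : ℝ) (hθ : θ ∈ Set.Icc (0 : ℝ) 1) (x : E)
    (φ ψ : E → ℝ) (hφ : DifferentiableAt ℝ φ x) (hψ : DifferentiableAt ℝ ψ x)
    (hpos : 0 < Real.sqrt ((1 - θ) * (φ x) ^ 2 + θ * (ψ x) ^ 2)) :
    DifferentiableAt ℝ
      (fun y => Real.sqrt ((1 - θ) * (φ y) ^ 2 + θ * (ψ y) ^ 2)) x ∧
    ‖gradient (fun y => Real.sqrt ((1 - θ) * (φ y) ^ 2 + θ * (ψ y) ^ 2)) x‖ ^ 2 ≤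
      (1 - θ) * ‖gradient φ x‖ ^ 2 + θ * ‖gradient ψ x‖ ^ 2 := by
  obtain ⟨hθ0, hθ1⟩ := hθ
  set u := gradient φ x with hu
  set v := gradient ψ x with hv
  have hSpos : 0 < (1 - θ) * (φ x) ^ 2 + θ * (ψ x) ^ 2 := Real.sqrt_pos.mp hpos
  set r : ℝ := Real.sqrt ((1 - θ) * (φ x) ^ 2 + θ * (ψ x) ^ 2) with hr
  have hr2 : r ^ 2 = (1 - θ) * (φ x) ^ 2 + θ * (ψ x) ^ 2 := Real.sq_sqrt hSpos.le
  have hrne : r ≠ 0 := hpos.ne'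
  have hφ' : HasFDerivAt φ (InnerProductSpace.toDual ℝ E u) x :=
    hφ.hasGradientAt.hasFDerivAt
  have hψ' : HasFDerivAt ψ (InnerProductSpace.toDual ℝ E v) x :=
    hψ.hasGradientAt.hasFDerivAt
  have hφsq : HasFDerivAt (fun y => (φ y) ^ 2)
      ((2 * φ x) • InnerProductSpace.toDual ℝ E u) x := by
    have := hφ'.mul hφ'
    simp only [two_mul, add_smul] at *
    simp only [pow_two]
    exact this
  have hψsq : HasFDerivAt (fun y => (ψ y) ^ 2)
      ((2 * ψ x) • InnerProductSpace.toDual ℝ E v) x := by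
    have := hψ'.mul hψ'
    simp only [two_mul, add_smul] at *
    simp only [pow_two]
    exact this
  have hg : HasFDerivAt (fun y => (1 - θ) * (φ y) ^ 2 + θ * (ψ y) ^ 2)
      ((1 - θ) • ((2 * φ x) • InnerProductSpace.toDual ℝ E u) +
        θ • ((2 * ψ x) • InnerProductSpace.toDual ℝ E v)) x :=
    (hφsq.const_mul (1 - θ)).add (hψsq.const_mul θ)
  have hζ : HasFDerivAt (fun y => Real.sqrt ((1 - θ) * (φ y) ^ 2 + θ * (ψ y) ^ 2))
      ((1 / (2 * r)) • ((1 - θ) • ((2 * φ x) • InnerProductSpace.toDual ℝ E u) +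
        θ • ((2 * ψ x) • InnerProductSpace.toDual ℝ E v))) x :=
    hg.sqrt hSpos.ne'
  set G : E := ((1 - θ) * φ x / r) • u + (θ * ψ x / r) • v with hG
  have hdual : (InnerProductSpace.toDual ℝ E) G =
      (1 / (2 * r)) • ((1 - θ) • ((2 * φ x) • InnerProductSpace.toDual ℝ E u) +
        θ • ((2 * ψ x) • InnerProductSpace.toDual ℝ E v)) := by
    rw [hG, map_add, map_smul, map_smul, smul_add, smul_smul, smul_smul, smul_smul, smul_smul]
    congr 1 <;> congr 1 <;> field_simp <;> ring
  have hζG : HasGradientAt (fun y => Real.sqrt ((1 - θ) * (φ y) ^ 2 + θ * (ψ y) ^ 2)) G x := by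
    rw [hasGradientAt_iff_hasFDerivAt, hdual]; exact hζ
  refine ⟨hζG.differentiableAt, ?_⟩
  rw [hζG.gradient]
  have htri : ‖G‖ ≤ (1 - θ) * |φ x| / r * ‖u‖ + θ * |ψ x| / r * ‖v‖ := by
    refine (norm_add_le _ _).trans ?_
    rw [norm_smul, norm_smul, Real.norm_eq_abs, Real.norm_eq_abs]
    have e1 : |(1 - θ) * φ x / r| = (1 - θ) * |φ x| / r := by
      rw [abs_div, abs_mul, abs_of_nonneg (by linarith : (0:ℝ) ≤ 1 - θ), abs_of_pos hpos]
    have e2 : |θ * ψ x / r| = θ * |ψ x| / r := by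
      rw [abs_div, abs_mul, abs_of_nonneg hθ0, abs_of_pos hpos]
    rw [e1, e2]
  have h1 : ‖G‖ ^ 2 ≤ ((1 - θ) * |φ x| / r * ‖u‖ + θ * |ψ x| / r * ‖v‖) ^ 2 :=
    pow_le_pow_left₀ (norm_nonneg G) htri 2
  clear_value u v r G
  clear hζ hg hφsq hψsq hdual hζG htri hφ' hψ' hpos
  refine h1.trans ?_
  have key : ((1 - θ) * |φ x| * ‖u‖ + θ * |ψ x| * ‖v‖) ^ 2 ≤
      ((1 - θ) * |φ x| ^ 2 + θ * |ψ x| ^ 2) * ((1 - θ) * ‖u‖ ^ 2 + θ * ‖v‖ ^ 2) := by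
    nlinarith [sq_nonneg (|φ x| * ‖v‖ - |ψ x| * ‖u‖), sq_nonneg (|φ x| * ‖v‖ + |ψ x| * ‖u‖),
      mul_nonneg hθ0 (sub_nonneg.mpr hθ1), norm_nonneg u, norm_nonneg v, abs_nonneg (φ x),
      abs_nonneg (ψ x)]
  have hS' : (1 - θ) * |φ x| ^ 2 + θ * |ψ x| ^ 2 = r ^ 2 := by
    rw [hr2, sq_abs, sq_abs]
  rw [hS'] at key
  have expand : ((1 - θ) * |φ x| / r * ‖u‖ + θ * |ψ x| / r * ‖v‖) ^ 2 =
      ((1 - θ) * |φ x| * ‖u‖ + θ * |ψ x| * ‖v‖) ^ 2 / r ^ 2 := by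
    field_simp
  rw [expand, div_le_iff₀ (by positivity : (0:ℝ) < r ^ 2)]
  linarith [key]
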